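/- Let Γ be a distance-regular graph on N vertices with diameter d, valencies κ_0, …, κ_d and intersection numbers b_i. For 1 ≤ m ≤ d−1, the difference of effective resistances between strata m+1 and m satisfies R_{m+1} − R_m = (2/(N κ_m b_m)) (N − Σ_{l=0}^{m} κ_l), where R_m denotes the effective resistance between any two vertices at graph distance m. -/

import Mathlib

open Matrix Finset
set_option linter.unusedSectionVars false

/-- The four Moore–Penrose pseudoinverse conditions for real matrices. -/
def IsMoorePenrose {V : Type*} [Fintype V] [DecidableEq V] (L Lp : Matrix V V ℝ) : Prop :=
  L * Lp * L = L ∧ Lp * L * Lp = Lp ∧ (L * Lp)ᵀ = L * Lp ∧ (Lp * L)ᵀ = Lp * L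

/-- Effective resistance between two nodes, from the pseudoinverse of the Laplacian. -/
def effRes {V : Type*} (Lp : Matrix V V ℝ) (α β : V) : ℝ :=
  Lp α α + Lp β β - 2 * Lp α β

/-- Distance-regularity with diameter `d` and intersection numbers `b i`, `c i`. -/
def IsDistanceRegular {V : Type*} [Fintype V] (G : SimpleGraph V) (d : ℕ) (b c : ℕ → ℕ) : Prop :=
  G.Connected ∧ (∀ α β : V, G.dist α β ≤ d) ∧
  ∀ i, i ≤ d → ∀ α β : V, G.dist α β = i →
    ({γ : V | G.Adj β γ ∧ G.dist α γ = i + 1}.ncard = b i ∧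
     {γ : V | G.Adj β γ ∧ G.dist α γ = i - 1}.ncard = c i)

namespace EffResAux

open scoped Classical

variable {V : Type*} [Fintype V] [DecidableEq V]

/-- Workhorse: two sums over equicardinal index sets whose values pairwise agree are equal. -/
lemma sum_eq_sum_of_card {S T : Finset V} (h : S.card = T.card) (f g : V → ℝ)
    (hfg : ∀ γ ∈ S, ∀ δ ∈ T, f γ = g δ) :
    ∑ γ ∈ S, f γ = ∑ δ ∈ T, g δ := by
  rcases S.eq_empty_or_nonempty with hS | hS
  · have hT : T = ∅ := Finset.card_eq_zero.mp (by rw [← h, hS, Finset.card_empty])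
    simp [hS, hT]
  · obtain ⟨γ0, hγ0⟩ := hS
    have hT : T.Nonempty := Finset.card_pos.mp (by rw [← h]; exact Finset.card_pos.mpr ⟨γ0, hγ0⟩)
    obtain ⟨δ0, hδ0⟩ := hT
    calc ∑ γ ∈ S, f γ = ∑ _γ ∈ S, g δ0 :=
          Finset.sum_congr rfl fun γ hγ => hfg γ hγ δ0 hδ0
      _ = S.card • g δ0 := Finset.sum_const _
      _ = T.card • g δ0 := by rw [h]
      _ = ∑ δ ∈ T, g δ := by
          rw [eq_comm]
          calc ∑ δ ∈ T, g δ = ∑ _δ ∈ T, g δ0 := by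
                refine Finset.sum_congr rfl fun δ hδ => ?_
                rw [← hfg γ0 hγ0 δ hδ, hfg γ0 hγ0 δ0 hδ0]
            _ = T.card • g δ0 := Finset.sum_const _

lemma ncard_setOf (p : V → Prop) [DecidablePred p] :
    {x | p x}.ncard = (Finset.univ.filter p).card := by
  rw [← Set.ncard_coe_finset]
  congr 1
  ext x; simp

section Graph

variable {G : SimpleGraph V} [DecidableRel G.Adj] {d : ℕ} {b c κ : ℕ → ℕ}

/-- Peel off the last vertex of a geodesic. -/
lemma peel (hconn : G.Connected) {α β : V} {n : ℕ} (h : G.dist α β = n + 1) :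
    ∃ γ, G.Adj γ β ∧ G.dist α γ = n := by
  obtain ⟨p, hp⟩ := hconn.exists_walk_length_eq_dist α β
  have hne : β ≠ α := by
    intro e; subst e; rw [SimpleGraph.dist_self] at h; omega
  obtain ⟨x, hadj, p', hpr⟩ := SimpleGraph.Walk.exists_eq_cons_of_ne hne p.reverse
  have hlen : p'.length = n := by
    have h2 := congrArg SimpleGraph.Walk.length hpr
    rw [SimpleGraph.Walk.length_reverse, hp, h, SimpleGraph.Walk.length_cons] at h2
    omega
  have h1 : G.dist α x ≤ n := by
    have := SimpleGraph.dist_le p'.reverse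
    rwa [SimpleGraph.Walk.length_reverse, hlen] at this
  have hxβ : G.dist x β = 1 := SimpleGraph.dist_eq_one_iff_adj.mpr hadj.symm
  have h2 : n ≤ G.dist α x := by
    have htr := hconn.dist_triangle (u := α) (v := x) (w := β)
    omega
  exact ⟨x, hadj.symm, le_antisymm h1 h2⟩

lemma exists_dist (hconn : G.Connected) {α β : V} {n : ℕ} (h : G.dist α β = n) :
    ∀ k ≤ n, ∃ γ, G.dist α γ = k := by
  induction n generalizing β with
  | zero => intro k hk; exact ⟨β, by omega⟩
  | succ n ih =>
    intro k hk
    rcases Nat.eq_or_lt_of_le hk with he | hlt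
    · exact ⟨β, by omega⟩
    · obtain ⟨γ, _, hγ⟩ := peel hconn h
      exact ih hγ k (by omega)

/-- Distances of adjacent vertices from a basepoint differ by at most one. -/
lemma adj_dist (hconn : G.Connected) {α γ δ : V} (hadj : G.Adj γ δ) :
    G.dist α γ ≤ G.dist α δ + 1 ∧ G.dist α δ ≤ G.dist α γ + 1 := by
  have h1 := hconn.dist_triangle (u := α) (v := δ) (w := γ)
  have h2 := hconn.dist_triangle (u := α) (v := γ) (w := δ)
  have e1 : G.dist δ γ = 1 := SimpleGraph.dist_eq_one_iff_adj.mpr hadj.symm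
  have e2 : G.dist γ δ = 1 := SimpleGraph.dist_eq_one_iff_adj.mpr hadj
  omega

/-- The set of neighbours of `γ` lying at distance `j` from `α`. -/
noncomputable def nb (G : SimpleGraph V) (α γ : V) (j : ℕ) : Finset V :=
  Finset.univ.filter (fun δ => G.Adj γ δ ∧ G.dist α δ = j)

lemma mem_nb {α γ δ : V} {j : ℕ} :
    δ ∈ nb G α γ j ↔ G.Adj γ δ ∧ G.dist α δ = j := by
  simp [nb]

lemma card_nb_b (hdr : IsDistanceRegular G d b c) {α γ : V} {i : ℕ} (hγ : G.dist α γ = i) :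
    (nb G α γ (i + 1)).card = b i := by
  have h := (hdr.2.2 i (hγ ▸ hdr.2.1 α γ) α γ hγ).1
  rw [ncard_setOf] at h
  rw [← h]
  congr 1
  ext δ; simp [nb]

lemma card_nb_c (hdr : IsDistanceRegular G d b c) {α γ : V} {i : ℕ} (hγ : G.dist α γ = i) :
    (nb G α γ (i - 1)).card = c i := by
  have h := (hdr.2.2 i (hγ ▸ hdr.2.1 α γ) α γ hγ).2
  rw [ncard_setOf] at h
  rw [← h]
  congr 1
  ext δ; simp [nb]

lemma degree_eq (hdr : IsDistanceRegular G d b c) (γ : V) : G.degree γ = b 0 := by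
  have h := card_nb_b (α := γ) (γ := γ) (i := 0) hdr (SimpleGraph.dist_self)
  rw [← h, ← SimpleGraph.card_neighborFinset_eq_degree]
  congr 1
  ext δ
  simp only [mem_nb, SimpleGraph.mem_neighborFinset, zero_add]
  constructor
  · intro h; exact ⟨h, SimpleGraph.dist_eq_one_iff_adj.mpr h⟩
  · intro h; exact h.1

lemma nb_disj {α γ : V} {j k : ℕ} (h : j ≠ k) : Disjoint (nb G α γ j) (nb G α γ k) := by
  rw [Finset.disjoint_left]
  intro δ h1 h2
  rw [mem_nb] at h1 h2
  exact h (h1.2 ▸ h2.2)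

lemma nbhd_eq (hconn : G.Connected) {α γ : V} {i : ℕ} (hi1 : 1 ≤ i) (hγ : G.dist α γ = i) :
    G.neighborFinset γ = (nb G α γ (i - 1) ∪ nb G α γ i) ∪ nb G α γ (i + 1) := by
  ext δ
  simp only [SimpleGraph.mem_neighborFinset, Finset.mem_union, mem_nb]
  constructor
  · intro hadj
    have hd := adj_dist (α := α) hconn hadj
    rw [hγ] at hd
    have : G.dist α δ = i - 1 ∨ G.dist α δ = i ∨ G.dist α δ = i + 1 := by omega
    tauto
  · rintro ((⟨h, _⟩ | ⟨h, _⟩) | ⟨h, _⟩) <;> exact h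

lemma sum_nbhd (hconn : G.Connected) {α γ : V} {i : ℕ} (hi1 : 1 ≤ i) (hγ : G.dist α γ = i)
    (f : V → ℝ) :
    ∑ δ ∈ G.neighborFinset γ, f δ =
      ∑ δ ∈ nb G α γ (i - 1), f δ + ∑ δ ∈ nb G α γ i, f δ + ∑ δ ∈ nb G α γ (i + 1), f δ := by
  rw [nbhd_eq hconn hi1 hγ, Finset.sum_union, Finset.sum_union (nb_disj (by omega))]
  rw [Finset.disjoint_union_left]
  exact ⟨nb_disj (by omega), nb_disj (by omega)⟩

lemma card_nbhd (hconn : G.Connected) {α γ : V} {i : ℕ} (hi1 : 1 ≤ i) (hγ : G.dist α γ = i) :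
    (nb G α γ (i - 1)).card + (nb G α γ i).card + (nb G α γ (i + 1)).card = G.degree γ := by
  rw [← SimpleGraph.card_neighborFinset_eq_degree, nbhd_eq hconn hi1 hγ,
    Finset.card_union_of_disjoint, Finset.card_union_of_disjoint (nb_disj (by omega))]
  rw [Finset.disjoint_union_left]
  exact ⟨nb_disj (by omega), nb_disj (by omega)⟩

end Graph
section DistDep

variable {G : SimpleGraph V} [DecidableRel G.Adj] {d : ℕ} {b c κ : ℕ → ℕ}

/-- A matrix whose entries depend only on the graph distance of the indices. -/
def DistDep (G : SimpleGraph V) (M : Matrix V V ℝ) : Prop :=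
  ∀ α β α' β' : V, G.dist α β = G.dist α' β' → M α β = M α' β'

/-- The all-ones matrix. -/
def allOnes (V : Type*) [Fintype V] : Matrix V V ℝ := Matrix.of fun _ _ => 1

lemma distDep_one (hconn : G.Connected) : DistDep G (1 : Matrix V V ℝ) := by
  intro α β α' β' h
  by_cases hb : α = β
  · have : α' = β' := hconn.dist_eq_zero_iff.mp (by rw [← h, hb, SimpleGraph.dist_self])
    simp [hb, this, Matrix.one_apply]
  · have : α' ≠ β' := by
      intro e
      exact hb (hconn.dist_eq_zero_iff.mp (by rw [h, e, SimpleGraph.dist_self]))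
    simp [Matrix.one_apply, hb, this]

lemma distDep_allOnes : DistDep G (allOnes V) := fun _ _ _ _ _ => rfl

lemma distDep_add {M M' : Matrix V V ℝ} (h : DistDep G M) (h' : DistDep G M') :
    DistDep G (M + M') := fun a x a' x' e => by
  simp only [Matrix.add_apply, h a x a' x' e, h' a x a' x' e]

lemma distDep_sub {M M' : Matrix V V ℝ} (h : DistDep G M) (h' : DistDep G M') :
    DistDep G (M - M') := fun a x a' x' e => by
  simp only [Matrix.sub_apply, h a x a' x' e, h' a x a' x' e]

lemma distDep_smul {M : Matrix V V ℝ} (r : ℝ) (h : DistDep G M) :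
    DistDep G (r • M) := fun a x a' x' e => by
  simp only [Matrix.smul_apply, h a x a' x' e, smul_eq_mul]

lemma distDep_sum {n : ℕ} {f : ℕ → Matrix V V ℝ}
    (h : ∀ i ∈ Finset.range n, DistDep G (f i)) :
    DistDep G (∑ i ∈ Finset.range n, f i) := fun a x a' x' e => by
  rw [Matrix.sum_apply, Matrix.sum_apply]
  exact Finset.sum_congr rfl fun i hi => h i hi a x a' x' e

lemma values_nb {M : Matrix V V ℝ} (hM : DistDep G M) {α β α' β' : V} {j : ℕ} :
    ∀ γ ∈ nb G α β j, ∀ δ ∈ nb G α' β' j, M α γ = M α' δ := by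
  intro γ hγ δ hδ
  rw [mem_nb] at hγ hδ
  exact hM α γ α' δ (by rw [hγ.2, hδ.2])

lemma distDep_mul_adj (hdr : IsDistanceRegular G d b c) {M : Matrix V V ℝ}
    (hM : DistDep G M) : DistDep G (M * G.adjMatrix ℝ) := by
  intro α β α' β' h
  rw [SimpleGraph.mul_adjMatrix_apply, SimpleGraph.mul_adjMatrix_apply]
  have hconn := hdr.1
  by_cases hi : G.dist α β = 0
  · have hβα : β = α := (hconn.dist_eq_zero_iff.mp hi).symm
    have hβ'α' : β' = α' := (hconn.dist_eq_zero_iff.mp (by rw [← h, hi])).symm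
    apply sum_eq_sum_of_card
    · rw [SimpleGraph.card_neighborFinset_eq_degree, SimpleGraph.card_neighborFinset_eq_degree,
        degree_eq hdr, degree_eq hdr]
    · intro γ hγ δ hδ
      rw [SimpleGraph.mem_neighborFinset] at hγ hδ
      apply hM
      rw [hβα] at hγ
      rw [hβ'α'] at hδ
      rw [SimpleGraph.dist_eq_one_iff_adj.mpr hγ, SimpleGraph.dist_eq_one_iff_adj.mpr hδ]
  · obtain ⟨n, h1⟩ : ∃ n, G.dist α β = n := ⟨_, rfl⟩
    have h2 : G.dist α' β' = n := by rw [← h, h1]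
    have hn1 : 1 ≤ n := by omega
    have s1 := sum_nbhd hconn hn1 h1 (fun δ => M α δ)
    have s2 := sum_nbhd hconn hn1 h2 (fun δ => M α' δ)
    rw [s1, s2]
    have e1 : ∑ δ ∈ nb G α β (n - 1), M α δ = ∑ δ ∈ nb G α' β' (n - 1), M α' δ :=
      sum_eq_sum_of_card (by rw [card_nb_c hdr h1, card_nb_c hdr h2]) _ _ (values_nb hM)
    have e2 : ∑ δ ∈ nb G α β n, M α δ = ∑ δ ∈ nb G α' β' n, M α' δ := by
      refine sum_eq_sum_of_card ?_ _ _ (values_nb hM)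
      have c1 := card_nbhd hconn hn1 h1
      have c2 := card_nbhd hconn hn1 h2
      rw [degree_eq hdr] at c1 c2
      have k1 := card_nb_c hdr h1
      have k2 := card_nb_c hdr h2
      have k3 := card_nb_b hdr h1
      have k4 := card_nb_b hdr h2
      omega
    have e3 : ∑ δ ∈ nb G α β (n + 1), M α δ = ∑ δ ∈ nb G α' β' (n + 1), M α' δ :=
      sum_eq_sum_of_card (by rw [card_nb_b hdr h1, card_nb_b hdr h2]) _ _ (values_nb hM)
    rw [e1, e2, e3]

lemma distDep_mul_allOnes (hdr : IsDistanceRegular G d b c)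
    (hκ : ∀ i, i ≤ d → ∀ α : V, {β : V | G.dist α β = i}.ncard = κ i)
    {M : Matrix V V ℝ} (hM : DistDep G M) : DistDep G (M * allOnes V) := by
  intro α β α' β' _
  have key : ∀ x y : V, (M * allOnes V) x y = ∑ δ : V, M x δ := by
    intro x y
    rw [Matrix.mul_apply]
    simp [allOnes]
  rw [key, key]
  have fib : ∀ x : V, ∑ δ : V, M x δ =
      ∑ j ∈ Finset.range (d + 1), ∑ δ ∈ Finset.univ.filter (fun δ => G.dist x δ = j), M x δ := by
    intro x
    rw [Finset.sum_fiberwise_of_maps_to]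
    intro δ _
    exact Finset.mem_range.mpr (Nat.lt_succ_of_le (hdr.2.1 x δ))
  rw [fib, fib]
  apply Finset.sum_congr rfl
  intro j hj
  have hjd : j ≤ d := Nat.lt_succ_iff.mp (Finset.mem_range.mp hj)
  apply sum_eq_sum_of_card
  · have q1 := hκ j hjd α
    have q2 := hκ j hjd α'
    rw [ncard_setOf] at q1 q2
    rw [show (Finset.univ.filter (fun δ => G.dist α δ = j)) =
        (Finset.univ.filter (fun x => G.dist α x = j)) from by ext; simp,
      show (Finset.univ.filter (fun δ => G.dist α' δ = j)) =
        (Finset.univ.filter (fun x => G.dist α' x = j)) from by ext; simp]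
    rw [q1, q2]
  · intro γ hγ δ hδ
    rw [Finset.mem_filter] at hγ hδ
    exact hM α γ α' δ (by rw [hγ.2, hδ.2])

lemma degMatrix_eq (hdr : IsDistanceRegular G d b c) :
    G.degMatrix ℝ = (b 0 : ℝ) • (1 : Matrix V V ℝ) := by
  ext x y
  rw [SimpleGraph.degMatrix, Matrix.diagonal_apply, Matrix.smul_apply, Matrix.one_apply]
  by_cases hxy : x = y <;> simp [hxy, degree_eq hdr]

lemma distDep_mul_lap (hdr : IsDistanceRegular G d b c) {M : Matrix V V ℝ}
    (hM : DistDep G M) : DistDep G (M * G.lapMatrix ℝ) := by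
  have : M * G.lapMatrix ℝ = (b 0 : ℝ) • M - M * G.adjMatrix ℝ := by
    rw [SimpleGraph.lapMatrix, Matrix.mul_sub, degMatrix_eq hdr, Matrix.mul_smul, mul_one]
  rw [this]
  exact distDep_sub (distDep_smul _ hM) (distDep_mul_adj hdr hM)

lemma distDep_pow_K (hdr : IsDistanceRegular G d b c)
    (hκ : ∀ i, i ≤ d → ∀ α : V, {β : V | G.dist α β = i}.ncard = κ i) (r : ℝ) (k : ℕ) :
    DistDep G ((G.lapMatrix ℝ + r • allOnes V) ^ k) := by
  induction k with
  | zero => rw [pow_zero]; exact distDep_one hdr.1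
  | succ n ih =>
    rw [pow_succ, Matrix.mul_add, Matrix.mul_smul]
    exact distDep_add (distDep_mul_lap hdr ih)
      (distDep_smul _ (distDep_mul_allOnes hdr hκ ih))

end DistDep
section MP

variable {G : SimpleGraph V} [DecidableRel G.Adj] {d : ℕ} {b c κ : ℕ → ℕ}

lemma lap_row_sum (x : V) : ∑ δ : V, G.lapMatrix ℝ x δ = 0 := by
  have h0 := congrFun (G.lapMatrix_mulVec_const_eq_zero (R := ℝ)) x
  simpa [Matrix.mulVec, dotProduct] using h0

lemma lap_symm_entry (x y : V) : G.lapMatrix ℝ x y = G.lapMatrix ℝ y x :=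
  (G.isSymm_lapMatrix (R := ℝ)).apply y x

lemma lap_mul_allOnes : G.lapMatrix ℝ * allOnes V = 0 := by
  ext x y
  rw [Matrix.mul_apply]
  simp only [allOnes, Matrix.of_apply, mul_one, Matrix.zero_apply]
  exact lap_row_sum x

lemma allOnes_mul_lap : allOnes V * G.lapMatrix ℝ = 0 := by
  ext x y
  rw [Matrix.mul_apply]
  simp only [allOnes, Matrix.of_apply, one_mul, Matrix.zero_apply]
  rw [Finset.sum_congr rfl fun δ _ => lap_symm_entry δ y]
  exact lap_row_sum y

lemma allOnes_mul_allOnes : allOnes V * allOnes V = (Fintype.card V : ℝ) • allOnes V := by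
  ext x y
  rw [Matrix.mul_apply]
  simp [allOnes, Finset.card_univ]

lemma lap_transpose : (G.lapMatrix ℝ)ᵀ = G.lapMatrix ℝ := G.isSymm_lapMatrix (R := ℝ)

lemma Lp_mul_allOnes {Lp : Matrix V V ℝ} (hLp : IsMoorePenrose (G.lapMatrix ℝ) Lp) :
    Lp * allOnes V = 0 := by
  obtain ⟨h1, h2, h3, h4⟩ := hLp
  have hLLpJ : G.lapMatrix ℝ * Lp * allOnes V = 0 := by
    rw [← h3, Matrix.transpose_mul, Matrix.mul_assoc, lap_transpose, lap_mul_allOnes,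
      Matrix.mul_zero]
  calc Lp * allOnes V = Lp * G.lapMatrix ℝ * Lp * allOnes V := by rw [h2]
    _ = Lp * (G.lapMatrix ℝ * Lp * allOnes V) := by
        rw [Matrix.mul_assoc, Matrix.mul_assoc, Matrix.mul_assoc]
    _ = 0 := by rw [hLLpJ, Matrix.mul_zero]

lemma allOnes_mul_Lp {Lp : Matrix V V ℝ} (hLp : IsMoorePenrose (G.lapMatrix ℝ) Lp) :
    allOnes V * Lp = 0 := by
  obtain ⟨h1, h2, h3, h4⟩ := hLp
  have hJLpL : allOnes V * (Lp * G.lapMatrix ℝ) = 0 := by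
    rw [← h4, Matrix.transpose_mul, ← Matrix.mul_assoc, lap_transpose, allOnes_mul_lap,
      Matrix.zero_mul]
  calc allOnes V * Lp = allOnes V * (Lp * G.lapMatrix ℝ * Lp) := by rw [h2]
    _ = allOnes V * (Lp * G.lapMatrix ℝ) * Lp := by
        simp only [Matrix.mul_assoc]
    _ = 0 := by rw [hJLpL, Matrix.zero_mul]

lemma Lp_mul_lap [Nonempty V] (hconn : G.Connected) {Lp : Matrix V V ℝ}
    (hLp : IsMoorePenrose (G.lapMatrix ℝ) Lp) :
    Lp * G.lapMatrix ℝ = 1 - (Fintype.card V : ℝ)⁻¹ • allOnes V := by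
  obtain ⟨h1, h2, h3, h4⟩ := hLp
  set L := G.lapMatrix ℝ with hL
  set Q : Matrix V V ℝ := 1 - Lp * L with hQdef
  have hLQ : L * Q = 0 := by
    rw [hQdef, Matrix.mul_sub, mul_one, ← Matrix.mul_assoc, h1, sub_self]
  have hQsymm : Qᵀ = Q := by rw [hQdef, Matrix.transpose_sub, Matrix.transpose_one, h4]
  have hsym : ∀ a x : V, Q a x = Q x a := by
    intro a x
    conv_lhs => rw [← hQsymm]
    rfl
  have hcol : ∀ y x x' : V, Q x y = Q x' y := by
    intro y x x'
    have hker : Matrix.toLin' L (fun δ => Q δ y) = 0 := by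
      rw [Matrix.toLin'_apply]
      funext z
      have hz : (L * Q) z y = 0 := by rw [hLQ]; rfl
      rw [Matrix.mul_apply] at hz
      simpa [Matrix.mulVec, dotProduct] using hz
    exact (G.lapMatrix_mulVec_eq_zero_iff_forall_reachable (x := fun δ => Q δ y)).mp
      (by rwa [Matrix.toLin'_apply] at hker)
      x x' (hconn x x')
  obtain ⟨x0⟩ := ‹Nonempty V›
  have hall : ∀ x y : V, Q x y = Q x0 x0 := by
    intro x y
    calc Q x y = Q x0 y := hcol y x x0
      _ = Q y x0 := hsym x0 y
      _ = Q x0 x0 := hcol x0 y x0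
  have hQJ : Q * allOnes V = allOnes V := by
    rw [hQdef, Matrix.sub_mul, one_mul, Matrix.mul_assoc, lap_mul_allOnes, Matrix.mul_zero,
      sub_zero]
  have hNne : (Fintype.card V : ℝ) ≠ 0 := by
    exact_mod_cast Fintype.card_ne_zero
  have hval : Q x0 x0 = (Fintype.card V : ℝ)⁻¹ := by
    have hsum := congrFun (congrFun hQJ x0) x0
    rw [Matrix.mul_apply] at hsum
    simp only [allOnes, Matrix.of_apply, mul_one] at hsum
    rw [Finset.sum_congr rfl fun δ _ => hall x0 δ] at hsum
    rw [Finset.sum_const, Finset.card_univ, nsmul_eq_mul] at hsum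
    field_simp
    linarith [hsum]
  have hQval : Q = (Fintype.card V : ℝ)⁻¹ • allOnes V := by
    ext x y
    rw [Matrix.smul_apply]
    simp only [allOnes, Matrix.of_apply, smul_eq_mul, mul_one]
    rw [hall x y, hval]
  rw [show Lp * L = 1 - Q from by rw [hQdef, sub_sub_cancel], hQval]

lemma B0_mul_K [Nonempty V] (hconn : G.Connected) {Lp : Matrix V V ℝ}
    (hLp : IsMoorePenrose (G.lapMatrix ℝ) Lp) :
    (Lp + (Fintype.card V : ℝ)⁻¹ • allOnes V) *
      (G.lapMatrix ℝ + (Fintype.card V : ℝ)⁻¹ • allOnes V) = 1 := by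
  have hNne : (Fintype.card V : ℝ) ≠ 0 := by exact_mod_cast Fintype.card_ne_zero
  rw [Matrix.add_mul, Matrix.mul_add, Matrix.mul_add]
  rw [Matrix.mul_smul, Lp_mul_allOnes hLp, smul_zero, add_zero]
  rw [Matrix.smul_mul, allOnes_mul_lap, smul_zero]
  rw [Matrix.smul_mul, Matrix.mul_smul, allOnes_mul_allOnes]
  rw [Lp_mul_lap hconn hLp]
  rw [smul_smul, smul_smul]
  rw [show (Fintype.card V : ℝ)⁻¹ * (Fintype.card V : ℝ)⁻¹ * (Fintype.card V : ℝ) =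
    (Fintype.card V : ℝ)⁻¹ from by rw [mul_assoc, inv_mul_cancel₀ hNne, mul_one]]
  abel

lemma distDep_Lp [Nonempty V] (hdr : IsDistanceRegular G d b c)
    (hκ : ∀ i, i ≤ d → ∀ α : V, {β : V | G.dist α β = i}.ncard = κ i)
    {Lp : Matrix V V ℝ} (hLp : IsMoorePenrose (G.lapMatrix ℝ) Lp) :
    DistDep G Lp := by
  set r : ℝ := (Fintype.card V : ℝ)⁻¹ with hr
  set K : Matrix V V ℝ := G.lapMatrix ℝ + r • allOnes V with hK
  have hB0 : (Lp + r • allOnes V) * K = 1 := B0_mul_K hdr.1 hLp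
  have hKinv : K⁻¹ = Lp + r • allOnes V := Matrix.inv_eq_left_inv hB0
  have hdet : IsUnit K.det := Matrix.isUnit_det_of_left_inverse hB0
  set p := K.charpoly with hp
  have hc0 : p.coeff 0 ≠ 0 := by
    have hd := Matrix.det_eq_sign_charpoly_coeff K
    intro h0
    rw [hp] at h0
    rw [h0, mul_zero] at hd
    exact hdet.ne_zero hd
  set Binv : Matrix V V ℝ :=
    (-(p.coeff 0)⁻¹) • ∑ i ∈ Finset.range p.natDegree, p.coeff (i + 1) • K ^ i with hBinv
  have hCH : ∑ i ∈ Finset.range (p.natDegree + 1), p.coeff i • K ^ i = 0 := by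
    have h := Matrix.aeval_self_charpoly K
    rwa [Polynomial.aeval_eq_sum_range] at h
  have hKB : K * Binv = 1 := by
    rw [hBinv, Matrix.mul_smul, Finset.mul_sum]
    have hstep : ∀ i, K * (p.coeff (i + 1) • K ^ i) = p.coeff (i + 1) • K ^ (i + 1) := by
      intro i; rw [Matrix.mul_smul, ← pow_succ']
    simp_rw [hstep]
    have hsplit := Finset.sum_range_succ' (fun i => p.coeff i • K ^ i) p.natDegree
    rw [hCH] at hsplit
    have hneg : ∑ i ∈ Finset.range p.natDegree, p.coeff (i + 1) • K ^ (i + 1) =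
        -(p.coeff 0 • (1 : Matrix V V ℝ)) := by
      rw [pow_zero] at hsplit
      exact eq_neg_of_add_eq_zero_left hsplit.symm
    rw [hneg, smul_neg, neg_smul, neg_neg, smul_smul, inv_mul_cancel₀ hc0, one_smul]
  have hKinv2 : K⁻¹ = Binv := Matrix.inv_eq_right_inv hKB
  have hLpEq : Lp = Binv - r • allOnes V := by
    rw [← hKinv2, hKinv, add_sub_cancel_right]
  rw [hLpEq]
  refine distDep_sub ?_ (distDep_smul _ distDep_allOnes)
  refine distDep_smul _ (distDep_sum ?_)
  intro i _
  exact distDep_smul _ (distDep_pow_K hdr hκ r i)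

end MP
end EffResAux

theorem effective_resistance_stratum_difference {V : Type*} [Fintype V] [DecidableEq V]
    (G : SimpleGraph V) [DecidableRel G.Adj] (d : ℕ) (b c κ : ℕ → ℕ)
    (hdr : IsDistanceRegular G d b c)
    (hκ : ∀ i, i ≤ d → ∀ α : V, {β : V | G.dist α β = i}.ncard = κ i)
    (Lp : Matrix V V ℝ) (hLp : IsMoorePenrose (G.lapMatrix ℝ) Lp)
    (m : ℕ) (hm1 : 1 ≤ m) (hmd : m ≤ d - 1)
    (α β β' : V) (hβ : G.dist α β = m) (hβ' : G.dist α β' = m + 1) :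
    effRes Lp α β' - effRes Lp α β =
      2 / ((Fintype.card V : ℝ) * κ m * b m) *
        ((Fintype.card V : ℝ) - ∑ l ∈ Finset.range (m + 1), (κ l : ℝ)) := by
  classical
  have hconn := hdr.1
  have : Nonempty V := ⟨α⟩
  have hNne : (Fintype.card V : ℝ) ≠ 0 := by exact_mod_cast Fintype.card_ne_zero
  have hdd : EffResAux.DistDep G Lp := EffResAux.distDep_Lp hdr hκ hLp
  have hQ := EffResAux.Lp_mul_lap hconn hLp
  have hd2 : 2 ≤ d := by omega
  have hm1d : m + 1 ≤ d := by omega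
  -- witnesses at every distance up to m+1
  have hwit : ∀ k ≤ m + 1, ∃ γ, G.dist α γ = k := EffResAux.exists_dist hconn hβ'
  let w : ℕ → V := fun k => if h : k ≤ m + 1 then (hwit k h).choose else α
  have hw : ∀ k, k ≤ m + 1 → G.dist α (w k) = k := by
    intro k hk
    simp only [w, dif_pos hk]
    exact (hwit k hk).choose_spec
  set φ : ℕ → ℝ := fun k => Lp α (w k) with hφ
  have hval : ∀ j, j ≤ m + 1 → ∀ δ : V, G.dist α δ = j → Lp α δ = φ j := by
    intro j hj δ hδ
    exact hdd α δ α (w j) (by rw [hδ, hw j hj])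
  -- entry formula of Lp * L
  have hLsplit : ∀ γ : V, (Lp * G.lapMatrix ℝ) α γ =
      (b 0 : ℝ) * Lp α γ - ∑ δ ∈ G.neighborFinset γ, Lp α δ := by
    intro γ
    rw [SimpleGraph.lapMatrix, Matrix.mul_sub, Matrix.sub_apply, EffResAux.degMatrix_eq hdr,
      Matrix.mul_smul, mul_one, Matrix.smul_apply, smul_eq_mul, SimpleGraph.mul_adjMatrix_apply]
  have hRHS : ∀ γ : V, (1 - (Fintype.card V : ℝ)⁻¹ • EffResAux.allOnes V) α γ =
      (if α = γ then (1 : ℝ) else 0) - (Fintype.card V : ℝ)⁻¹ := by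
    intro γ
    rw [Matrix.sub_apply, Matrix.smul_apply, Matrix.one_apply]
    simp [EffResAux.allOnes]
  have hsum_j : ∀ γ : V, ∀ j, j ≤ m + 1 →
      ∑ δ ∈ EffResAux.nb G α γ j, Lp α δ = ((EffResAux.nb G α γ j).card : ℝ) * φ j := by
    intro γ j hj
    rw [Finset.sum_congr rfl (fun δ hδ => hval j hj δ ((EffResAux.mem_nb.mp hδ).2)),
      Finset.sum_const, nsmul_eq_mul]
  -- the base identity at distance 0
  have hφ0 : Lp α α = φ 0 := hval 0 (by omega) α SimpleGraph.dist_self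
  have row0 : (b 0 : ℝ) * (φ 0 - φ 1) = 1 - (Fintype.card V : ℝ)⁻¹ := by
    have hentry := congrFun (congrFun hQ α) α
    rw [hLsplit, hRHS, if_pos rfl] at hentry
    have hnb : ∑ δ ∈ G.neighborFinset α, Lp α δ = ((b 0 : ℕ) : ℝ) * φ 1 := by
      have h1 : ∀ δ ∈ G.neighborFinset α, Lp α δ = φ 1 := by
        intro δ hδ
        rw [SimpleGraph.mem_neighborFinset] at hδ
        exact hval 1 (by omega) δ (SimpleGraph.dist_eq_one_iff_adj.mpr hδ)
      rw [Finset.sum_congr rfl h1, Finset.sum_const, nsmul_eq_mul,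
        SimpleGraph.card_neighborFinset_eq_degree, EffResAux.degree_eq hdr]
    rw [hnb, hφ0] at hentry
    linear_combination hentry
  -- the recurrence rows for 1 ≤ i ≤ m
  have row : ∀ i, 1 ≤ i → i ≤ m →
      (c i : ℝ) * (φ i - φ (i - 1)) + (b i : ℝ) * (φ i - φ (i + 1)) =
        -(Fintype.card V : ℝ)⁻¹ := by
    intro i hi1 him
    set γ := w i with hγdef
    have hγ : G.dist α γ = i := hw i (by omega)
    have hαγ : ¬ (α = γ) := by
      intro h; rw [← h, SimpleGraph.dist_self] at hγ; omega
    have hentry := congrFun (congrFun hQ α) γ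
    rw [hLsplit, hRHS, if_neg hαγ] at hentry
    rw [EffResAux.sum_nbhd hconn hi1 hγ] at hentry
    rw [hsum_j γ (i - 1) (by omega), hsum_j γ i (by omega), hsum_j γ (i + 1) (by omega)]
      at hentry
    have k1 : ((EffResAux.nb G α γ (i - 1)).card : ℝ) = (c i : ℝ) := by
      exact_mod_cast EffResAux.card_nb_c hdr hγ
    have k3 : ((EffResAux.nb G α γ (i + 1)).card : ℝ) = (b i : ℝ) := by
      exact_mod_cast EffResAux.card_nb_b hdr hγ
    have k2 : ((EffResAux.nb G α γ (i - 1)).card : ℝ) + ((EffResAux.nb G α γ i).card : ℝ)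
        + ((EffResAux.nb G α γ (i + 1)).card : ℝ) = (b 0 : ℝ) := by
      have := EffResAux.card_nbhd hconn hi1 hγ
      rw [EffResAux.degree_eq hdr] at this
      exact_mod_cast this
    have hLpγ : Lp α γ = φ i := hval i (by omega) γ hγ
    rw [k1, k3, hLpγ] at hentry
    linear_combination hentry + φ i * k2 - φ i * k1 - φ i * k3
  -- valency recursion via edge double counting
  have hsph : ∀ i, i ≤ d → ∀ x : V,
      (Finset.univ.filter (fun δ => G.dist x δ = i)).card = κ i := by
    intro i hi x
    have h := hκ i hi x
    rw [EffResAux.ncard_setOf] at h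
    rw [← h]
  have κrel : ∀ i, 1 ≤ i → i ≤ d → κ i * c i = κ (i - 1) * b (i - 1) := by
    intro i hi1 hid
    have key := Finset.sum_comm (s := (Finset.univ : Finset V)) (t := (Finset.univ : Finset V))
      (f := fun γ δ => if G.dist α γ = i - 1 ∧ G.Adj γ δ ∧ G.dist α δ = i then (1 : ℕ) else 0)
    have lhs_eq : (∑ γ : V, ∑ δ : V,
        if G.dist α γ = i - 1 ∧ G.Adj γ δ ∧ G.dist α δ = i then (1 : ℕ) else 0)
        = κ (i - 1) * b (i - 1) := by
      have hinner : ∀ γ : V, (∑ δ : V,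
          if G.dist α γ = i - 1 ∧ G.Adj γ δ ∧ G.dist α δ = i then (1 : ℕ) else 0)
          = if G.dist α γ = i - 1 then b (i - 1) else 0 := by
        intro γ
        by_cases hγ : G.dist α γ = i - 1
        · rw [if_pos hγ]
          have : (∑ δ : V, if G.dist α γ = i - 1 ∧ G.Adj γ δ ∧ G.dist α δ = i
              then (1 : ℕ) else 0) = (EffResAux.nb G α γ i).card := by
            rw [EffResAux.nb, Finset.card_filter]
            exact Finset.sum_congr rfl fun δ _ => by simp [hγ]
          rw [this]
          have hcb := EffResAux.card_nb_b hdr hγ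
          rw [show i - 1 + 1 = i from by omega] at hcb
          exact hcb
        · rw [if_neg hγ]
          exact Finset.sum_eq_zero fun δ _ => by simp [hγ]
      rw [Finset.sum_congr rfl fun γ _ => hinner γ]
      rw [← Finset.sum_filter]
      rw [Finset.sum_const, hsph (i - 1) (by omega) α, smul_eq_mul]
    have rhs_eq : (∑ δ : V, ∑ γ : V,
        if G.dist α γ = i - 1 ∧ G.Adj γ δ ∧ G.dist α δ = i then (1 : ℕ) else 0)
        = κ i * c i := by
      have hinner : ∀ δ : V, (∑ γ : V,
          if G.dist α γ = i - 1 ∧ G.Adj γ δ ∧ G.dist α δ = i then (1 : ℕ) else 0)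
          = if G.dist α δ = i then c i else 0 := by
        intro δ
        by_cases hδ : G.dist α δ = i
        · rw [if_pos hδ]
          have : (∑ γ : V, if G.dist α γ = i - 1 ∧ G.Adj γ δ ∧ G.dist α δ = i
              then (1 : ℕ) else 0) = (EffResAux.nb G α δ (i - 1)).card := by
            rw [EffResAux.nb, Finset.card_filter]
            refine Finset.sum_congr rfl fun γ _ => ?_
            by_cases hc : G.Adj δ γ ∧ G.dist α γ = i - 1
            · rw [if_pos hc, if_pos (⟨hc.2, hc.1.symm, hδ⟩ :
                G.dist α γ = i - 1 ∧ G.Adj γ δ ∧ G.dist α δ = i)]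
            · rw [if_neg hc, if_neg (fun hx : G.dist α γ = i - 1 ∧ G.Adj γ δ ∧ G.dist α δ = i
                => hc ⟨hx.2.1.symm, hx.1⟩)]
          rw [this]
          exact EffResAux.card_nb_c hdr hδ
        · rw [if_neg hδ]
          exact Finset.sum_eq_zero fun γ _ => by simp [hδ]
      rw [Finset.sum_congr rfl fun δ _ => hinner δ]
      rw [← Finset.sum_filter]
      rw [Finset.sum_const, hsph i (by omega) α, smul_eq_mul]
    rw [← rhs_eq, ← key, lhs_eq]
  have hκ0 : κ 0 = 1 := by
    have h := hsph 0 (by omega) α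
    rw [show (Finset.univ.filter (fun δ => G.dist α δ = 0)) = {α} from by
      ext x; simp [hconn.dist_eq_zero_iff, eq_comm]] at h
    simpa using h.symm
  -- the telescoped identity
  have main : ∀ i, i ≤ m → ((κ i : ℝ) * (b i : ℝ)) * (φ i - φ (i + 1)) =
      1 - (∑ l ∈ Finset.range (i + 1), (κ l : ℝ)) / (Fintype.card V : ℝ) := by
    intro i
    induction i with
    | zero =>
      intro _
      have hs : (∑ l ∈ Finset.range (0 + 1), (κ l : ℝ)) = 1 := by simp [hκ0]
      rw [hs, hκ0, Nat.cast_one, one_mul, row0, one_div]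
    | succ n ih =>
      intro hnm
      have hn := ih (by omega)
      have hrow := row (n + 1) (by omega) hnm
      rw [show n + 1 - 1 = n from by omega] at hrow
      have hrel := κrel (n + 1) (by omega) (by omega)
      rw [show n + 1 - 1 = n from by omega] at hrel
      have hrelR : (κ (n + 1) : ℝ) * (c (n + 1) : ℝ) = (κ n : ℝ) * (b n : ℝ) := by
        exact_mod_cast hrel
      rw [Finset.sum_range_succ]
      linear_combination (κ (n + 1) : ℝ) * hrow + (φ n - φ (n + 1)) * hrelR + hn
  have hmain := main m le_rfl
  -- nonvanishing of κ m and b m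
  have hκm : κ m ≠ 0 := by
    have h := hsph m (by omega) α
    have hβmem : β ∈ Finset.univ.filter (fun δ => G.dist α δ = m) := by
      simp [hβ]
    intro h0
    rw [h0] at h
    rw [Finset.card_eq_zero] at h
    rw [h] at hβmem
    simp at hβmem
  have hbm : b m ≠ 0 := by
    obtain ⟨γ, hadj, hγ⟩ := EffResAux.peel hconn hβ'
    have h := EffResAux.card_nb_b hdr hγ
    have hβ'mem : β' ∈ EffResAux.nb G α γ (m + 1) := EffResAux.mem_nb.mpr ⟨hadj, hβ'⟩
    intro h0
    rw [h0] at h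
    rw [Finset.card_eq_zero] at h
    rw [h] at hβ'mem
    simp at hβ'mem
  -- final assembly
  have hdiag1 : Lp β β = Lp α α := hdd β β α α (by rw [SimpleGraph.dist_self, SimpleGraph.dist_self])
  have hdiag2 : Lp β' β' = Lp α α := hdd β' β' α α (by rw [SimpleGraph.dist_self, SimpleGraph.dist_self])
  have hLpβ : Lp α β = φ m := hval m (by omega) β hβ
  have hLpβ' : Lp α β' = φ (m + 1) := hval (m + 1) le_rfl β' hβ'
  rw [effRes, effRes, hdiag1, hdiag2, hLpβ, hLpβ']
  have hκmR : (κ m : ℝ) ≠ 0 := by exact_mod_cast hκm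
  have hbmR : (b m : ℝ) ≠ 0 := by exact_mod_cast hbm
  field_simp at hmain ⊢
  ring_nf
  ring_nf at hmain
  linear_combination (2 : ℝ) * hmain
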